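/- If the preference relation is empty, then the preferred answer sets of (P, ∅) under the fragment-based semantics G coincide exactly with the answer sets of P. -/

import Mathlib

/-- A literal over atoms `A`: `(true, a)` is the atom `a`, `(false, a)` is `¬ a`. -/
abbrev Lit (A : Type) := Bool × A

/-- A rule with head, positive body and negative body. -/
structure Rule (A : Type) where
  head : Lit A
  pos : Set (Lit A)
  neg : Set (Lit A)

variable {A : Type}

/-- Heads of a set of rules. -/
def headSet (R : Set (Rule A)) : Set (Lit A) := Rule.head '' R

/-- `R ⊆ P` positively satisfies `P`. -/
def PosSat (P R : Set (Rule A)) : Prop :=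
  R ⊆ P ∧ ∀ r ∈ P, r.pos ⊆ headSet R → r ∈ R

/-- The minimal set of rules positively satisfying `P`. -/
def MP (P : Set (Rule A)) : Set (Rule A) := ⋂₀ {R | PosSat P R}

/-- A set of rules defeats a rule. -/
def defeatsRule (R : Set (Rule A)) (r : Rule A) : Prop :=
  (headSet R ∩ r.neg).Nonempty

/-- A set of rules defeats a set of rules. -/
def defeatsSet (R₁ R₂ : Set (Rule A)) : Prop := ∃ r ∈ R₂, defeatsRule R₁ r

/-- The reduct `P^R` removes each rule defeated by `R`. -/
def reduct (P R : Set (Rule A)) : Set (Rule A) := {r ∈ P | ¬ defeatsRule R r}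

/-- `R ⊆ P` is a generating set of `P` iff `R = MP (P^R)`. -/
def GenSet (P R : Set (Rule A)) : Prop := R ⊆ P ∧ R = MP (reduct P R)

/-- A set of literals is consistent iff it contains no complementary pair. -/
def Consistent (S : Set (Lit A)) : Prop :=
  ∀ a : A, ¬ (((true, a) ∈ S) ∧ ((false, a) ∈ S))

/-- Answer sets via generating sets. -/
def AnswerSet (P : Set (Rule A)) (S : Set (Lit A)) : Prop :=
  Consistent S ∧ ∃ R, GenSet P R ∧ headSet R = S

/-- `Γ_S(P)`: rules whose positive body is in `S` and negative body disjoint from `S`. -/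
def Gamma (S : Set (Lit A)) (P : Set (Rule A)) : Set (Rule A) :=
  {r ∈ P | r.pos ⊆ S ∧ r.neg ∩ S = ∅}

/-- Fragments of a program. -/
def Frag (P : Set (Rule A)) : Set (Set (Rule A)) := {R | R ⊆ P ∧ MP R = R}

/-- Fragment reduct: remove fragments defeated by a member of `E`. -/
def fragReduct (P : Set (Rule A)) (E : Set (Set (Rule A))) : Set (Set (Rule A)) :=
  {X ∈ Frag P | ¬ ∃ Y ∈ E, defeatsSet Y X}

/-- Stable fragment sets. -/
def StableFragSet (P : Set (Rule A)) (E : Set (Set (Rule A))) : Prop :=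
  E ⊆ Frag P ∧ fragReduct P E = E

/-- Mutually defeating (conflicting) sets of rules. -/
def Conflicting (X Y : Set (Rule A)) : Prop := defeatsSet X Y ∧ defeatsSet Y X

/-- `X` overrides `Y` w.r.t. the preference relation `lt`. -/
def Overrides (lt : Rule A → Rule A → Prop) (X Y : Set (Rule A)) : Prop :=
  Conflicting X Y ∧
    ∀ r₁ ∈ X, defeatsRule Y r₁ → ∃ r₂ ∈ Y, defeatsRule X r₂ ∧ lt r₂ r₁

/-- Preferred fragment reduct (semantics G). -/
def prefFragReduct (lt : Rule A → Rule A → Prop) (P : Set (Rule A))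
    (E : Set (Set (Rule A))) : Set (Set (Rule A)) :=
  {X ∈ Frag P | ¬ ∃ Y ∈ E, defeatsSet Y X ∧ ¬ Overrides lt X Y}

/-- Preferred stable fragment sets (semantics G). -/
def PrefStableFragSet (lt : Rule A → Rule A → Prop) (P : Set (Rule A))
    (E : Set (Set (Rule A))) : Prop :=
  E ⊆ Frag P ∧ prefFragReduct lt P E = E

/-- Preferred answer sets under the fragment-based semantics G. -/
def GPrefAnswerSet (lt : Rule A → Rule A → Prop) (P : Set (Rule A))
    (S : Set (Lit A)) : Prop :=
  Consistent S ∧ ∃ E, PrefStableFragSet lt P E ∧ headSet (⋃₀ E) = S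

/-- `T(r,R)` for semantics GNO. -/
def Trules (lt : Rule A → Rule A → Prop) (r : Rule A) (R : Set (Rule A)) :
    Set (Rule A) :=
  MP {p ∈ R | ¬ lt p r}

/-- GNO reduct: remove rules `r` with `body⁻(r) ∩ head(T(r,R)) ≠ ∅`. -/
def gnoReduct (lt : Rule A → Rule A → Prop) (P R : Set (Rule A)) : Set (Rule A) :=
  {r ∈ P | ¬ (r.neg ∩ headSet (Trules lt r R)).Nonempty}

/-- GNO-preferred generating sets. -/
def GNOPrefGen (lt : Rule A → Rule A → Prop) (P R : Set (Rule A)) : Prop :=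
  GenSet P R ∧ R = MP (gnoReduct lt P R)

/-- GNO-preferred answer sets. -/
def GNOPrefAnswerSet (lt : Rule A → Rule A → Prop) (P : Set (Rule A))
    (S : Set (Lit A)) : Prop :=
  Consistent S ∧ ∃ R, GNOPrefGen lt P R ∧ headSet R = S

/-- A rule defeats a rule. -/
def defeats (r₁ r₂ : Rule A) : Prop := r₁.head ∈ r₂.neg

/-- `r₁` directly overrides `r₂` w.r.t. `lt`. -/
def DirOverrides (lt : Rule A → Rule A → Prop) (r₁ r₂ : Rule A) : Prop :=
  (defeats r₁ r₂ ∧ defeats r₂ r₁) ∧ lt r₂ r₁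

/-- D-reduct for the direct-conflict semantics. -/
def dReduct (lt : Rule A → Rule A → Prop) (P R : Set (Rule A)) : Set (Rule A) :=
  {r₁ ∈ P | ¬ ∃ r₂ ∈ R, defeats r₂ r₁ ∧ ¬ DirOverrides lt r₁ r₂}

/-- D-preferred generating sets. -/
def DPrefGen (lt : Rule A → Rule A → Prop) (P R : Set (Rule A)) : Prop :=
  R = MP (dReduct lt P R)

/-- D-preferred answer sets. -/
def DPrefAnswerSet (lt : Rule A → Rule A → Prop) (P : Set (Rule A))
    (S : Set (Lit A)) : Prop :=
  Consistent S ∧ ∃ R, DPrefGen lt P R ∧ headSet R = S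

/-- Stratified programs. -/
def Stratified (P : Set (Rule A)) : Prop :=
  ∃ lam : Lit A → ℕ, ∀ r ∈ P,
    (∀ l ∈ r.pos, lam l ≤ lam r.head) ∧ (∀ l ∈ r.neg, lam l < lam r.head)

lemma headSet_mono {R R' : Set (Rule A)} (h : R ⊆ R') : headSet R ⊆ headSet R' :=
  Set.image_mono h

lemma MP_le {Q R' : Set (Rule A)} (h : PosSat Q R') : MP Q ⊆ R' :=
  fun x hx => Set.mem_sInter.mp hx R' h

lemma posSat_MP (Q : Set (Rule A)) : PosSat Q (MP Q) := by
  constructor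
  · exact MP_le ⟨subset_rfl, fun r hr _ => hr⟩
  · intro r hr hpos
    refine Set.mem_sInter.mpr fun R' hR' => ?_
    exact hR'.2 r hr (hpos.trans (headSet_mono (MP_le hR')))

lemma MP_mono {Q Q' : Set (Rule A)} (h : Q ⊆ Q') : MP Q ⊆ MP Q' := by
  have : PosSat Q (MP Q' ∩ Q) := by
    refine ⟨Set.inter_subset_right, fun r hr hpos => ?_⟩
    have hpos' : r.pos ⊆ headSet (MP Q') :=
      hpos.trans (headSet_mono Set.inter_subset_left)
    exact ⟨(posSat_MP Q').2 r (h hr) hpos', hr⟩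
  exact (MP_le this).trans Set.inter_subset_left

lemma MP_idem (Q : Set (Rule A)) : MP (MP Q) = MP Q := by
  apply Set.Subset.antisymm
  · exact MP_le ⟨subset_rfl, fun r hr _ => hr⟩
  · intro x hx
    refine Set.mem_sInter.mpr fun R' hR' => ?_
    have : PosSat Q R' := by
      refine ⟨hR'.1.trans (posSat_MP Q).1, fun r hr hp => ?_⟩
      exact hR'.2 r ((posSat_MP Q).2 r hr (hp.trans (headSet_mono hR'.1))) hp
    exact MP_le this hx

lemma no_overrides (X Y : Set (Rule A)) :
    ¬ Overrides (fun _ _ => False) X Y := by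
  rintro ⟨⟨_, hYX⟩, hall⟩
  obtain ⟨r, hrX, hd⟩ := hYX
  obtain ⟨_, _, _, hf⟩ := hall r hrX hd
  exact hf

lemma defeatsSet_mono {Y Y' X : Set (Rule A)} (h : Y ⊆ Y') :
    defeatsSet Y X → defeatsSet Y' X := by
  rintro ⟨r, hr, l, hl, hn⟩
  exact ⟨r, hr, l, headSet_mono h hl, hn⟩

lemma exists_defeats_iff (E : Set (Set (Rule A))) (X : Set (Rule A)) :
    (∃ Y ∈ E, defeatsSet Y X) ↔ defeatsSet (⋃₀ E) X := by
  constructor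
  · rintro ⟨Y, hY, hd⟩
    exact defeatsSet_mono (Set.subset_sUnion_of_mem hY) hd
  · rintro ⟨r, hr, l, ⟨r', hr', rfl⟩, hn⟩
    obtain ⟨Y, hY, hr'Y⟩ := hr'
    exact ⟨Y, hY, r, hr, r'.head, ⟨r', hr'Y, rfl⟩, hn⟩

/-- with the empty preference relation, G-preferred answer sets
coincide with answer sets. -/
theorem gPref_empty_eq_answerSet (P : Set (Rule A)) (hP : P.Finite)
    (S : Set (Lit A)) :
    GPrefAnswerSet (fun _ _ => False) P S ↔ AnswerSet P S := by
  have hpref : ∀ E, prefFragReduct (fun _ _ => False) P E = fragReduct P E := by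
    intro E
    ext X
    simp only [prefFragReduct, fragReduct, Set.mem_setOf_eq]
    constructor
    · rintro ⟨hX, h⟩
      exact ⟨hX, fun ⟨Y, hY, hd⟩ => h ⟨Y, hY, hd, no_overrides X Y⟩⟩
    · rintro ⟨hX, h⟩
      exact ⟨hX, fun ⟨Y, hY, hd, _⟩ => h ⟨Y, hY, hd⟩⟩
  constructor
  · rintro ⟨hS, E, ⟨hEF, hEq⟩, hhead⟩
    rw [hpref] at hEq
    set U : Set (Rule A) := ⋃₀ E with hU
    have hEmem : ∀ X, X ∈ E ↔ (X ∈ Frag P ∧ ¬ defeatsSet U X) := by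
      intro X
      rw [← hEq]
      simp only [fragReduct, Set.mem_setOf_eq, exists_defeats_iff E X, hU]
    have hUP : U ⊆ P := by
      rintro r ⟨X, hX, hrX⟩
      exact ((hEmem X).mp hX).1.1 hrX
    have hXred : ∀ X ∈ E, X ⊆ reduct P U := by
      intro X hX r hrX
      obtain ⟨⟨hXP, _⟩, hnd⟩ := (hEmem X).mp hX
      exact ⟨hXP hrX, fun hd => hnd ⟨r, hrX, hd⟩⟩
    refine ⟨hS, U, ⟨hUP, ?_⟩, hhead⟩
    apply Set.Subset.antisymm
    · rintro r ⟨X, hX, hrX⟩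
      have hfrag : MP X = X := ((hEmem X).mp hX).1.2
      exact MP_mono (hXred X hX) (by rw [hfrag]; exact hrX)
    · intro r hr
      have hM : MP (reduct P U) ∈ E := by
        refine (hEmem _).mpr ⟨⟨(MP_le ⟨subset_rfl, fun r hr _ => hr⟩).trans
          (fun x hx => hx.1), MP_idem _⟩, ?_⟩
        rintro ⟨r', hr', hd⟩
        exact ((posSat_MP (reduct P U)).1 hr').2 hd
      exact ⟨MP (reduct P U), hM, hr⟩
  · rintro ⟨hS, R, ⟨hRP, hR⟩, hhead⟩
    set E : Set (Set (Rule A)) := {X | X ∈ Frag P ∧ ¬ defeatsSet R X} with hE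
    have hRred : R ⊆ reduct P R := by
      intro r hr
      rw [hR] at hr
      exact (posSat_MP (reduct P R)).1 hr
    have hRE : R ∈ E := by
      refine ⟨⟨hRP, by rw [hR, MP_idem]⟩, ?_⟩
      rintro ⟨r, hrR, hd⟩
      exact (hRred hrR).2 hd
    have hsub : ∀ X ∈ E, X ⊆ R := by
      rintro X ⟨⟨hXP, hXM⟩, hnd⟩
      have : X ⊆ reduct P R := fun r hrX => ⟨hXP hrX, fun hd => hnd ⟨r, hrX, hd⟩⟩
      rw [← hXM, hR]
      exact MP_mono this
    have hUnion : ⋃₀ E = R := by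
      apply Set.Subset.antisymm
      · rintro r ⟨X, hX, hrX⟩
        exact hsub X hX hrX
      · exact Set.subset_sUnion_of_mem hRE
    refine ⟨hS, E, ⟨fun X hX => hX.1, ?_⟩, by rw [hUnion]; exact hhead⟩
    rw [hpref]
    ext X
    simp only [fragReduct, Set.mem_setOf_eq, hE]
    constructor
    · rintro ⟨hXF, h⟩
      exact ⟨hXF, fun hd => h ⟨R, hRE, hd⟩⟩
    · rintro ⟨hXF, hnd⟩
      exact ⟨hXF, fun ⟨Y, hYE, hd⟩ => hnd (defeatsSet_mono (hsub Y hYE) hd)⟩
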